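/- Define sequences b_m of rationals by b_0 = 0, b_1 = Q_0 ∈ ℚ, and the recurrence −m^n·b_m = (Σ_{j=0}^n c_j'·(m−2)^j)·b_{m−2} + (Σ_{j=0}^n c_j''·(m−1)^j)·b_{m−1} for m ≥ 2, where c_j', c_j'' ∈ ℤ. Then, writing q_1 for the denominator of b_1, we have q_1·(m!)^n·b_m ∈ ℤ for all m. -/

import Mathlib

/-- Formula (18-3): the recurrence arising from the inhomogeneous Picard–Fuchs
equation shows that the denominator of `b_m` divides `q_1·(m!)^n`. -/
theorem denominator_bound_of_picard_fuchs_recurrence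
    (n : ℕ) (Q0 : ℚ) (c' c'' : ℕ → ℤ) (b : ℕ → ℚ)
    (h0 : b 0 = 0) (h1 : b 1 = Q0)
    (hrec : ∀ m : ℕ, 2 ≤ m →
      -((m : ℚ)) ^ n * b m =
        (∑ j ∈ Finset.range (n + 1), (c' j : ℚ) * ((m : ℚ) - 2) ^ j) * b (m - 2)
          + (∑ j ∈ Finset.range (n + 1), (c'' j : ℚ) * ((m : ℚ) - 1) ^ j) * b (m - 1)) :
    ∀ m : ℕ, ∃ z : ℤ, ((b 1).den : ℚ) * (m.factorial : ℚ) ^ n * b m = z := by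
  intro m
  induction m using Nat.strong_induction_on with
  | _ m ih =>
    match m, ih with
    | 0, _ => exact ⟨0, by simp [h0]⟩
    | 1, _ => exact ⟨(b 1).num, by simp [Rat.mul_den_eq_num, mul_comm]⟩
    | (m+2), ih =>
      obtain ⟨z2, hz2⟩ := ih m (by omega)
      obtain ⟨z1, hz1⟩ := ih (m+1) (by omega)
      set A : ℤ := ∑ j ∈ Finset.range (n+1), c' j * (m : ℤ)^j with hA
      set B : ℤ := ∑ j ∈ Finset.range (n+1), c'' j * ((m:ℤ)+1)^j with hB
      refine ⟨-(A * ((m:ℤ)+1)^n * z2 + B * z1), ?_⟩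
      have hr := hrec (m+2) (by omega)
      have e2 : m + 2 - 2 = m := rfl
      have e1 : m + 2 - 1 = m + 1 := rfl
      rw [e1, e2] at hr
      have hAq : (A : ℚ) = ∑ j ∈ Finset.range (n+1), (c' j : ℚ) * ((m:ℚ)+2-2)^j := by
        rw [hA]; push_cast; refine Finset.sum_congr rfl (fun j _ => ?_); ring
      have hBq : (B : ℚ) = ∑ j ∈ Finset.range (n+1), (c'' j : ℚ) * ((m:ℚ)+2-1)^j := by
        rw [hB]; push_cast; ring_nf
      push_cast at hr ⊢
      rw [← hAq, ← hBq] at hr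
      have hf2 : ((m+2).factorial : ℚ) = ((m:ℚ)+2) * (((m:ℚ)+1) * (m.factorial:ℚ)) := by
        push_cast [Nat.factorial_succ]; ring
      have hf1 : ((m+1).factorial : ℚ) = ((m:ℚ)+1) * (m.factorial:ℚ) := by
        push_cast [Nat.factorial_succ]; ring
      rw [hf1, mul_pow] at hz1
      rw [hf2, mul_pow, mul_pow]
      linear_combination (-(((m:ℚ)+1)^n * ((m.factorial:ℚ))^n) * ((b 1).den : ℚ)) * hr
        - (A:ℚ) * ((m:ℚ)+1)^n * hz2 - (B:ℚ) * hz1
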